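/- If (I, α) and (J, β) are unit objects in a strict semi-monoidal 2-category, with chosen left constraint λ_X : I⊗X → X for I and right constraint r_X : X⊗J → X for J, then the object I⊗J together with the arrow γ := (r_I ⊗ λ_J) : (I⊗J)⊗(I⊗J) → I⊗J is again a unit object. -/

import Mathlib

open CategoryTheory

universe w v u

section Two
variable {B : Type u} [Bicategory.{w, v} B] [Bicategory.Strict B]

open Bicategory

/-- A 1-cell admitting a pseudo-inverse. -/
def IsEquiArrow {a b : B} (f : a ⟶ b) : Prop :=
  ∃ g : b ⟶ a, Nonempty (f ≫ g ≅ 𝟙 a) ∧ Nonempty (g ≫ f ≅ 𝟙 b)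

/-- A strict (2-functorial, strictly associative) tensor product on a strict 2-category. -/
structure Tensor2 (B : Type u) [Bicategory.{w, v} B] [Bicategory.Strict B] where
  obj : B → B → B
  hom : ∀ {a b c d : B}, (a ⟶ b) → (c ⟶ d) → (obj a c ⟶ obj b d)
  cell : ∀ {a b c d : B} {f f' : a ⟶ b} {g g' : c ⟶ d},
    (f ⟶ f') → (g ⟶ g') → (hom f g ⟶ hom f' g')
  hom_id : ∀ (a c : B), hom (𝟙 a) (𝟙 c) = 𝟙 (obj a c)
  hom_comp : ∀ {a b c a' b' c' : B} (f : a ⟶ b) (g : b ⟶ c) (f' : a' ⟶ b') (g' : b' ⟶ c'),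
    hom (f ≫ g) (f' ≫ g') = hom f f' ≫ hom g g'
  cell_id : ∀ {a b c d : B} (f : a ⟶ b) (g : c ⟶ d), cell (𝟙 f) (𝟙 g) = 𝟙 (hom f g)
  cell_comp : ∀ {a b c d : B} {f f' f'' : a ⟶ b} {g g' g'' : c ⟶ d}
    (η : f ⟶ f') (η' : f' ⟶ f'') (θ : g ⟶ g') (θ' : g' ⟶ g''),
    cell (η ≫ η') (θ ≫ θ') = cell η θ ≫ cell η' θ'
  cell_whisker : ∀ {a b c a' b' c' : B} {f₁ f₂ : a ⟶ b} {g₁ g₂ : b ⟶ c}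
    {f₁' f₂' : a' ⟶ b'} {g₁' g₂' : b' ⟶ c'}
    (η : f₁ ⟶ f₂) (θ : g₁ ⟶ g₂) (η' : f₁' ⟶ f₂') (θ' : g₁' ⟶ g₂'),
    cell (η ▷ g₁ ≫ f₂ ◁ θ) (η' ▷ g₁' ≫ f₂' ◁ θ') =
      eqToHom (hom_comp f₁ g₁ f₁' g₁') ≫ (cell η η' ▷ hom g₁ g₁') ≫
        (hom f₂ f₂' ◁ cell θ θ') ≫ eqToHom (hom_comp f₂ g₂ f₂' g₂').symm
  assoc : ∀ (a b c : B), obj (obj a b) c = obj a (obj b c)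
  hom_assoc : ∀ {a a' b b' c c' : B} (f : a ⟶ a') (g : b ⟶ b') (k : c ⟶ c'),
    hom (hom f g) k ≫ eqToHom (assoc a' b' c') = eqToHom (assoc a b c) ≫ hom f (hom g k)

variable (T : Tensor2 B)

/-- The 2-functor "tensoring with `I` on the left", as a functor on hom-categories. -/
def lFun (I X Y : B) : (X ⟶ Y) ⥤ (T.obj I X ⟶ T.obj I Y) where
  obj f := T.hom (𝟙 I) f
  map η := T.cell (𝟙 (𝟙 I)) η
  map_id f := T.cell_id _ _
  map_comp {f g h} η θ := by
    have := T.cell_comp (𝟙 (𝟙 I)) (𝟙 (𝟙 I)) η θ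
    simpa using this

/-- The 2-functor "tensoring with `I` on the right", as a functor on hom-categories. -/
def rFun (I X Y : B) : (X ⟶ Y) ⥤ (T.obj X I ⟶ T.obj Y I) where
  obj f := T.hom f (𝟙 I)
  map η := T.cell η (𝟙 (𝟙 I))
  map_id f := T.cell_id _ _
  map_comp {f g h} η θ := by
    have := T.cell_comp η θ (𝟙 (𝟙 I)) (𝟙 (𝟙 I))
    simpa using this

/-- Cancellable object: tensoring with it on either side is fully faithful, i.e. induces
equivalences of hom-categories. -/
def Cancellable2 (I : B) : Prop :=
  (∀ X Y : B, (lFun T I X Y).IsEquivalence) ∧ (∀ X Y : B, (rFun T I X Y).IsEquivalence)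

/-- A unit object: a cancellable pseudo-idempotent. -/
def IsUnit2 (I : B) (α : T.obj I I ⟶ I) : Prop :=
  Cancellable2 T I ∧ IsEquiArrow α

end Two

open CategoryTheory Bicategory

section Aux

universe w' v' u'
variable {B : Type u'} [Bicategory.{w', v'} B] [Bicategory.Strict B]

open Bicategory

lemma isEquiArrow_id (a : B) : IsEquiArrow (𝟙 a) :=
  ⟨𝟙 a, ⟨eqToIso (by simp)⟩, ⟨eqToIso (by simp)⟩⟩

lemma precomp_isEquivalence {a b : B} {f : a ⟶ b} (hf : IsEquiArrow f) (c : B) :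
    (precomp c f).IsEquivalence := by
  obtain ⟨g, ⟨i⟩, ⟨j⟩⟩ := hf
  exact (CategoryTheory.Equivalence.mk (precomp c f) (precomp c g)
    (((associatorNatIsoRight g f c).symm ≪≫ (precomposing b b c).mapIso j ≪≫
      leftUnitorNatIso b c).symm)
    ((associatorNatIsoRight f g c).symm ≪≫ (precomposing a a c).mapIso i ≪≫
      leftUnitorNatIso a c)).isEquivalence_functor

lemma postcomp_isEquivalence {b c : B} {f : b ⟶ c} (hf : IsEquiArrow f) (a : B) :
    (postcomp a f).IsEquivalence := by
  obtain ⟨g, ⟨i⟩, ⟨j⟩⟩ := hf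
  exact (CategoryTheory.Equivalence.mk (postcomp a f) (postcomp a g)
    ((associatorNatIsoLeft a f g ≪≫ (postcomposing a b b).mapIso i ≪≫
      rightUnitorNatIso a b).symm)
    (associatorNatIsoLeft a g f ≪≫ (postcomposing a c c).mapIso j ≪≫
      rightUnitorNatIso a c)).isEquivalence_functor

variable (T : Tensor2 B)

def Tensor2.hom_iso_aux {a b c d : B} {f f' : a ⟶ b} {g g' : c ⟶ d}
    (i : f ≅ f') (j : g ≅ g') : T.hom f g ≅ T.hom f' g' where
  hom := T.cell i.hom j.hom
  inv := T.cell i.inv j.inv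
  hom_inv_id := by rw [← T.cell_comp]; simp [T.cell_id]
  inv_hom_id := by rw [← T.cell_comp]; simp [T.cell_id]

lemma tensor_isEquiArrow {a b c d : B} {f : a ⟶ b} {g : c ⟶ d}
    (hf : IsEquiArrow f) (hg : IsEquiArrow g) : IsEquiArrow (T.hom f g) := by
  obtain ⟨f', ⟨i⟩, ⟨i'⟩⟩ := hf
  obtain ⟨g', ⟨j⟩, ⟨j'⟩⟩ := hg
  exact ⟨T.hom f' g',
    ⟨eqToIso (T.hom_comp f f' g g').symm ≪≫ T.hom_iso_aux i j ≪≫ eqToIso (T.hom_id a c)⟩,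
    ⟨eqToIso (T.hom_comp f' f g' g).symm ≪≫ T.hom_iso_aux i' j' ≪≫ eqToIso (T.hom_id b d)⟩⟩

lemma Tensor2.cell_conj {a b c d : B} {f₁ f₂ g₁ g₂ : a ⟶ b} {x₁ x₂ y₁ y₂ : c ⟶ d}
    (hf₁ : f₁ = g₁) (hf₂ : f₂ = g₂) (hx₁ : x₁ = y₁) (hx₂ : x₂ = y₂)
    (η : g₁ ⟶ g₂) (θ : y₁ ⟶ y₂) :
    T.cell (eqToHom hf₁ ≫ η ≫ eqToHom hf₂.symm) (eqToHom hx₁ ≫ θ ≫ eqToHom hx₂.symm) =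
      eqToHom (by rw [hf₁, hx₁]) ≫ T.cell η θ ≫ eqToHom (by rw [hf₂, hx₂]) := by
  subst hf₁; subst hf₂; subst hx₁; subst hx₂; simp

lemma Tensor2.hom_id_comp {K K' X Y : B} (e : K ⟶ K') (f : X ⟶ Y) :
    T.hom (𝟙 K) f ≫ T.hom e (𝟙 Y) = T.hom e f := by
  rw [← T.hom_comp]; simp

lemma Tensor2.hom_comp_id {K K' X Y : B} (e : K ⟶ K') (f : X ⟶ Y) :
    T.hom e (𝟙 X) ≫ T.hom (𝟙 K') f = T.hom e f := by
  rw [← T.hom_comp]; simp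

lemma Tensor2.hom_id_comp' {K K' X Y : B} (e : K ⟶ K') (f : X ⟶ Y) :
    T.hom f (𝟙 K) ≫ T.hom (𝟙 Y) e = T.hom f e := by
  rw [← T.hom_comp]; simp

lemma Tensor2.hom_comp_id' {K K' X Y : B} (e : K ⟶ K') (f : X ⟶ Y) :
    T.hom (𝟙 X) e ≫ T.hom f (𝟙 K') = T.hom f e := by
  rw [← T.hom_comp]; simp

lemma Tensor2.cell_wr {K K' X Y : B} (e : K ⟶ K') {f f' : X ⟶ Y} (η : f ⟶ f') :
    T.cell (𝟙 (𝟙 K)) η ▷ T.hom e (𝟙 Y) =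
      eqToHom (T.hom_id_comp e f) ≫ T.cell (𝟙 e) η ≫ eqToHom (T.hom_id_comp e f').symm := by
  have h := T.cell_whisker (𝟙 (𝟙 K)) (𝟙 e) η (𝟙 (𝟙 Y))
  simp only [Bicategory.id_whiskerRight, Bicategory.whiskerLeft_id, Category.comp_id,
    Category.id_comp, T.cell_id, Bicategory.whiskerRight_id,
    Bicategory.Strict.rightUnitor_eqToIso, eqToIso.hom, eqToIso.inv] at h
  rw [show (𝟙 (𝟙 K ≫ e) : (𝟙 K ≫ e) ⟶ (𝟙 K ≫ e)) =
        eqToHom (Category.id_comp e) ≫ 𝟙 e ≫ eqToHom (Category.id_comp e).symm by simp,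
      T.cell_conj (Category.id_comp e) (Category.id_comp e) (Category.comp_id f) (Category.comp_id f')] at h
  rw [eqToHom_comp_iff, comp_eqToHom_iff] at h
  simp only [Category.assoc] at h
  rw [h]
  simp

lemma Tensor2.cell_wl {K K' X Y : B} (e : K ⟶ K') {f f' : X ⟶ Y} (η : f ⟶ f') :
    T.hom e (𝟙 X) ◁ T.cell (𝟙 (𝟙 K')) η =
      eqToHom (T.hom_comp_id e f) ≫ T.cell (𝟙 e) η ≫ eqToHom (T.hom_comp_id e f').symm := by
  have h := T.cell_whisker (𝟙 e) (𝟙 (𝟙 K')) (𝟙 (𝟙 X)) η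
  simp only [Bicategory.id_whiskerRight, Bicategory.whiskerLeft_id, Category.comp_id,
    Category.id_comp, T.cell_id, Bicategory.id_whiskerLeft,
    Bicategory.Strict.leftUnitor_eqToIso, eqToIso.hom, eqToIso.inv] at h
  rw [show (𝟙 (e ≫ 𝟙 K') : (e ≫ 𝟙 K') ⟶ (e ≫ 𝟙 K')) =
        eqToHom (Category.comp_id e) ≫ 𝟙 e ≫ eqToHom (Category.comp_id e).symm by simp,
      T.cell_conj (Category.comp_id e) (Category.comp_id e)
        (Category.id_comp f) (Category.id_comp f')] at h
  rw [eqToHom_comp_iff, comp_eqToHom_iff] at h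
  simp only [Category.assoc] at h
  rw [h]
  simp

lemma Tensor2.cell_wr' {K K' X Y : B} (e : K ⟶ K') {f f' : X ⟶ Y} (η : f ⟶ f') :
    T.cell η (𝟙 (𝟙 K)) ▷ T.hom (𝟙 Y) e =
      eqToHom (T.hom_id_comp' e f) ≫ T.cell η (𝟙 e) ≫ eqToHom (T.hom_id_comp' e f').symm := by
  have h := T.cell_whisker η (𝟙 (𝟙 Y)) (𝟙 (𝟙 K)) (𝟙 e)
  simp only [Bicategory.id_whiskerRight, Bicategory.whiskerLeft_id, Category.comp_id,
    Category.id_comp, T.cell_id, Bicategory.whiskerRight_id,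
    Bicategory.Strict.rightUnitor_eqToIso, eqToIso.hom, eqToIso.inv] at h
  rw [show (𝟙 (𝟙 K ≫ e) : (𝟙 K ≫ e) ⟶ (𝟙 K ≫ e)) =
        eqToHom (Category.id_comp e) ≫ 𝟙 e ≫ eqToHom (Category.id_comp e).symm by simp,
      T.cell_conj (Category.comp_id f) (Category.comp_id f')
        (Category.id_comp e) (Category.id_comp e)] at h
  rw [eqToHom_comp_iff, comp_eqToHom_iff] at h
  simp only [Category.assoc] at h
  rw [h]
  simp

lemma Tensor2.cell_wl' {K K' X Y : B} (e : K ⟶ K') {f f' : X ⟶ Y} (η : f ⟶ f') :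
    T.hom (𝟙 X) e ◁ T.cell η (𝟙 (𝟙 K')) =
      eqToHom (T.hom_comp_id' e f) ≫ T.cell η (𝟙 e) ≫ eqToHom (T.hom_comp_id' e f').symm := by
  have h := T.cell_whisker (𝟙 (𝟙 X)) η (𝟙 e) (𝟙 (𝟙 K'))
  simp only [Bicategory.id_whiskerRight, Bicategory.whiskerLeft_id, Category.comp_id,
    Category.id_comp, T.cell_id, Bicategory.id_whiskerLeft,
    Bicategory.Strict.leftUnitor_eqToIso, eqToIso.hom, eqToIso.inv] at h
  rw [show (𝟙 (e ≫ 𝟙 K') : (e ≫ 𝟙 K') ⟶ (e ≫ 𝟙 K')) =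
        eqToHom (Category.comp_id e) ≫ 𝟙 e ≫ eqToHom (Category.comp_id e).symm by simp,
      T.cell_conj (Category.id_comp f) (Category.id_comp f')
        (Category.comp_id e) (Category.comp_id e)] at h
  rw [eqToHom_comp_iff, comp_eqToHom_iff] at h
  simp only [Category.assoc] at h
  rw [h]
  simp

lemma eqToHom_conj_aux {C : Type*} [Category C] {a a' b b' c m : C} (p1 : a = a')
    (M : a' ⟶ b') (p2 : b' = b) (p3 : b = c) (p4 : a = m) (p5 : m = a') (p6 : b' = c) :
    (eqToHom p1 ≫ M ≫ eqToHom p2) ≫ eqToHom p3 = eqToHom p4 ≫ eqToHom p5 ≫ M ≫ eqToHom p6 := by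
  subst p1 p2 p3 p5; simp

lemma lFun_transfer {K K' : B} (e : K ⟶ K') (he : IsEquiArrow e)
    (h : ∀ X Y : B, (lFun T K' X Y).IsEquivalence) (X Y : B) :
    (lFun T K X Y).IsEquivalence := by
  have hpost : (postcomp (T.obj K X) (T.hom e (𝟙 Y))).IsEquivalence :=
    postcomp_isEquivalence (tensor_isEquiArrow T he (isEquiArrow_id Y)) _
  have hpre : (precomp (T.obj K' Y) (T.hom e (𝟙 X))).IsEquivalence :=
    precomp_isEquivalence (tensor_isEquiArrow T he (isEquiArrow_id X)) _
  have hK' := h X Y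
  have hcomp : (lFun T K' X Y ⋙ precomp (T.obj K' Y) (T.hom e (𝟙 X))).IsEquivalence :=
    Functor.isEquivalence_trans _ _
  have hiso : lFun T K X Y ⋙ postcomp (T.obj K X) (T.hom e (𝟙 Y)) ≅
      lFun T K' X Y ⋙ precomp (T.obj K' Y) (T.hom e (𝟙 X)) :=
    NatIso.ofComponents
      (fun f => eqToIso (by
        simp only [Functor.comp_obj, postcomp_obj, precomp_obj, lFun]
        rw [T.hom_id_comp, T.hom_comp_id]))
      (fun {f f'} η => by
        simp only [Functor.comp_map, postcomp_map, precomp_map, lFun, eqToIso.hom]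
        rw [T.cell_wr, T.cell_wl]
        erw [eqToIso.hom, eqToIso.hom]
        exact eqToHom_conj_aux _ _ _ _ _ _ _)
  have : (lFun T K X Y ⋙ postcomp (T.obj K X) (T.hom e (𝟙 Y))).IsEquivalence :=
    Functor.isEquivalence_of_iso hiso.symm
  exact Functor.isEquivalence_of_comp_right _ (postcomp (T.obj K X) (T.hom e (𝟙 Y)))

lemma rFun_transfer {K K' : B} (e : K ⟶ K') (he : IsEquiArrow e)
    (h : ∀ X Y : B, (rFun T K' X Y).IsEquivalence) (X Y : B) :
    (rFun T K X Y).IsEquivalence := by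
  have hpost : (postcomp (T.obj X K) (T.hom (𝟙 Y) e)).IsEquivalence :=
    postcomp_isEquivalence (tensor_isEquiArrow T (isEquiArrow_id Y) he) _
  have hpre : (precomp (T.obj Y K') (T.hom (𝟙 X) e)).IsEquivalence :=
    precomp_isEquivalence (tensor_isEquiArrow T (isEquiArrow_id X) he) _
  have hK' := h X Y
  have hcomp : (rFun T K' X Y ⋙ precomp (T.obj Y K') (T.hom (𝟙 X) e)).IsEquivalence :=
    Functor.isEquivalence_trans _ _
  have hiso : rFun T K X Y ⋙ postcomp (T.obj X K) (T.hom (𝟙 Y) e) ≅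
      rFun T K' X Y ⋙ precomp (T.obj Y K') (T.hom (𝟙 X) e) :=
    NatIso.ofComponents
      (fun f => eqToIso (by
        simp only [Functor.comp_obj, postcomp_obj, precomp_obj, rFun]
        rw [T.hom_id_comp', T.hom_comp_id']))
      (fun {f f'} η => by
        simp only [Functor.comp_map, postcomp_map, precomp_map, rFun, eqToIso.hom]
        rw [T.cell_wr', T.cell_wl']
        erw [eqToIso.hom, eqToIso.hom]
        exact eqToHom_conj_aux _ _ _ _ _ _ _)
  have : (rFun T K X Y ⋙ postcomp (T.obj X K) (T.hom (𝟙 Y) e)).IsEquivalence :=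
    Functor.isEquivalence_of_iso hiso.symm
  exact Functor.isEquivalence_of_comp_right _ (postcomp (T.obj X K) (T.hom (𝟙 Y) e))

end Aux


/-- If `(I, α)` and `(J, β)` are unit objects in a strict semi-monoidal 2-category, with a
chosen left constraint `λ_J : I ⊗ J ⟶ J` for `I` (with invertible `L : I ⊗ λ_J ⟹ α ⊗ J`) and
a chosen right constraint `r_I : I ⊗ J ⟶ I` for `J` (with invertible
`R : I ⊗ β ⟹ r_I ⊗ J`), the object `I ⊗ J` with `γ := r_I ⊗ λ_J` is again a unit object. -/
theorem tensor_of_units_is_unit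
    {B : Type*} [Bicategory B] [Bicategory.Strict B] (T : Tensor2 B)
    {I : B} {α : T.obj I I ⟶ I} (hI : IsUnit2 T I α)
    {J : B} {β : T.obj J J ⟶ J} (hJ : IsUnit2 T J β)
    (lamJ : T.obj I J ⟶ J)
    (L : T.hom (𝟙 I) lamJ ⟶ eqToHom (T.assoc I I J).symm ≫ T.hom α (𝟙 J))
    (hlamJ : IsEquiArrow lamJ) (hL : IsIso L)
    (rI : T.obj I J ⟶ I)
    (R : T.hom (𝟙 I) β ⟶ eqToHom (T.assoc I J J).symm ≫ T.hom rI (𝟙 J))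
    (hrI : IsEquiArrow rI) (hR : IsIso R) :
    IsUnit2 T (T.obj I J) (T.hom rI lamJ) := by
  obtain ⟨⟨hIl, hIr⟩, hα⟩ := hI
  obtain ⟨⟨hJl, hJr⟩, hβ⟩ := hJ
  exact ⟨⟨fun X Y => lFun_transfer T lamJ hlamJ hJl X Y,
    fun X Y => rFun_transfer T rI hrI hIr X Y⟩, tensor_isEquiArrow T hrI hlamJ⟩
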